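/- Let m ≥ 2, let Υ(m) be defined recursively by Υ(2) = [1] and Υ(m) = Υ(m−1) ++ [m−1, m−2, …, 1] ++ [i+1 : i ∈ Υ(m−1)], and define permutations π_0, π_1, …, π_{|Υ(m)|} of {1, …, m} by π_0 = identity and π_{t+1} obtained from π_t by the adjacent transposition at position Υ(m)[t+1] (the (t+1)-st entry of the list). Then every subset S ⊆ {1, …, m} with 1 ≤ |S| ≤ m−1 occurs as the prefix set of size |S| of some π_t. -/

import Mathlib

/-- The prefix set of size `k` of a permutation `σ` of `{1, …, m}` (represented
0-indexed as `Equiv.Perm (Fin m)`): the set `{σ(1), …, σ(k)}`. -/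
def prefixSet {m : ℕ} (σ : Equiv.Perm (Fin m)) (k : ℕ) : Finset (Fin m) :=
  (Finset.univ.filter fun i : Fin m => (i : ℕ) < k).image σ

/-- The adjacent transposition at (1-indexed) position `j` of an ordering of
`m` variables: it swaps positions `j` and `j+1` (0-indexed `j−1` and `j`). -/
def adjSwap (m j : ℕ) : Equiv.Perm (Fin m) :=
  if h : 1 ≤ j ∧ j + 1 ≤ m then Equiv.swap ⟨j - 1, by omega⟩ ⟨j, by omega⟩ else 1

/-- `σ'` is obtained from `σ` by an adjacent transposition at some position. -/
def IsAdjSwapStep {m : ℕ} (σ σ' : Equiv.Perm (Fin m)) : Prop :=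
  ∃ j : ℕ, 1 ≤ j ∧ j + 1 ≤ m ∧ σ' = σ * adjSwap m j

set_option maxHeartbeats 1000000

namespace GreedyAux

variable {m : ℕ}

def posSet (m a k : ℕ) : Finset (Fin m) :=
  Finset.univ.filter fun i : Fin m => a ≤ (i : ℕ) ∧ (i : ℕ) < a + k

def winPrefix (σ : Equiv.Perm (Fin m)) (a k : ℕ) : Finset (Fin m) :=
  (posSet m a k).image σ

def applyList (σ : Equiv.Perm (Fin m)) : List ℕ → Equiv.Perm (Fin m)
  | [] => σ
  | j :: l => applyList (σ * adjSwap m j) l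

lemma applyList_append (σ : Equiv.Perm (Fin m)) (l1 l2 : List ℕ) :
    applyList σ (l1 ++ l2) = applyList (applyList σ l1) l2 := by
  induction l1 generalizing σ with
  | nil => rfl
  | cons j l ih => simp [applyList, ih]

lemma adjSwap_def (j : ℕ) (h1 : 1 ≤ j) (h2 : j + 1 ≤ m) :
    adjSwap m j = Equiv.swap ⟨j - 1, by omega⟩ ⟨j, by omega⟩ := dif_pos ⟨h1, h2⟩

lemma adjSwap_apply_ne (i : Fin m) (j : ℕ) (hj1 : j ≠ (i : ℕ)) (hj2 : j ≠ (i : ℕ) + 1) :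
    adjSwap m j i = i := by
  unfold adjSwap
  split
  · next h =>
      apply Equiv.swap_apply_of_ne_of_ne
      · exact fun hc => by apply_fun Fin.val at hc; simp at hc; omega
      · exact fun hc => by apply_fun Fin.val at hc; simp at hc; omega
  · rfl

lemma adjSwap_apply_left (j : ℕ) (h1 : 1 ≤ j) (h2 : j + 1 ≤ m) :
    adjSwap m j ⟨j - 1, by omega⟩ = ⟨j, by omega⟩ := by
  rw [adjSwap_def j h1 h2]; exact Equiv.swap_apply_left _ _

lemma adjSwap_apply_right (j : ℕ) (h1 : 1 ≤ j) (h2 : j + 1 ≤ m) :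
    adjSwap m j ⟨j, by omega⟩ = ⟨j - 1, by omega⟩ := by
  rw [adjSwap_def j h1 h2]; exact Equiv.swap_apply_right _ _

lemma applyList_fix (l : List ℕ) (σ : Equiv.Perm (Fin m)) (i : Fin m)
    (h : ∀ j ∈ l, j ≠ (i : ℕ) ∧ j ≠ (i : ℕ) + 1) :
    applyList σ l i = σ i := by
  induction l generalizing σ with
  | nil => rfl
  | cons j l ih =>
      rw [applyList, ih _ (fun j hj => h j (List.mem_cons_of_mem _ hj))]
      have hj := h j List.mem_cons_self
      simp [Equiv.Perm.mul_apply, adjSwap_apply_ne i j hj.1 hj.2]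

lemma posSet_zero (a : ℕ) : posSet m a 0 = ∅ := by
  ext i; simp [posSet]

lemma posSet_succ (a k : ℕ) (h : a + k < m) :
    posSet m a (k + 1) = insert ⟨a + k, h⟩ (posSet m a k) := by
  ext i
  simp only [posSet, Finset.mem_filter, Finset.mem_univ, true_and, Finset.mem_insert,
    Fin.ext_iff]
  omega

lemma posSet_cons (a k : ℕ) (h : a < m) (hk : 1 ≤ k) :
    posSet m a k = insert ⟨a, h⟩ (posSet m (a + 1) (k - 1)) := by
  ext i
  simp only [posSet, Finset.mem_filter, Finset.mem_univ, true_and, Finset.mem_insert,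
    Fin.ext_iff]
  omega

lemma card_posSet (a k : ℕ) (h : a + k ≤ m) : (posSet m a k).card = k := by
  induction k with
  | zero => simp [posSet_zero]
  | succ k ih =>
      rw [posSet_succ a k (by omega), Finset.card_insert_of_notMem, ih (by omega)]
      simp [posSet]

lemma winPrefix_zero (σ : Equiv.Perm (Fin m)) (a : ℕ) : winPrefix σ a 0 = ∅ := by
  simp [winPrefix, posSet_zero]

lemma winPrefix_succ (σ : Equiv.Perm (Fin m)) (a k : ℕ) (h : a + k < m) :
    winPrefix σ a (k + 1) = insert (σ ⟨a + k, h⟩) (winPrefix σ a k) := by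
  rw [winPrefix, posSet_succ a k h, Finset.image_insert]; rfl

lemma winPrefix_cons (σ : Equiv.Perm (Fin m)) (a k : ℕ) (h : a < m) (hk : 1 ≤ k) :
    winPrefix σ a k = insert (σ ⟨a, h⟩) (winPrefix σ (a + 1) (k - 1)) := by
  rw [winPrefix, posSet_cons a k h hk, Finset.image_insert]; rfl

lemma card_winPrefix (σ : Equiv.Perm (Fin m)) (a k : ℕ) (h : a + k ≤ m) :
    (winPrefix σ a k).card = k := by
  rw [winPrefix, Finset.card_image_of_injective _ σ.injective, card_posSet a k h]

lemma not_mem_winPrefix (σ : Equiv.Perm (Fin m)) (i : Fin m) (a k : ℕ)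
    (hi : (i : ℕ) < a ∨ a + k ≤ (i : ℕ)) : σ i ∉ winPrefix σ a k := by
  simp only [winPrefix, Finset.mem_image, not_exists]
  rintro x ⟨hx, hσ⟩
  have := σ.injective hσ
  subst this
  simp [posSet] at hx
  omega


lemma posSet_image_adjSwap (j a N : ℕ) (hj1 : a + 1 ≤ j) (hj2 : j < a + N) :
    (posSet m a N).image (adjSwap m j) = posSet m a N := by
  have hsub : (posSet m a N).image (adjSwap m j) ⊆ posSet m a N := by
    rw [Finset.image_subset_iff]
    intro i hi
    by_cases hc : 1 ≤ j ∧ j + 1 ≤ m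
    · simp only [posSet, Finset.mem_filter, Finset.mem_univ, true_and] at hi ⊢
      by_cases h1 : (i : ℕ) = j - 1
      · have : i = ⟨j - 1, by omega⟩ := Fin.ext h1
        rw [this, adjSwap_apply_left j hc.1 hc.2]
        simp; omega
      · by_cases h2 : (i : ℕ) = j
        · have : i = ⟨j, by omega⟩ := Fin.ext h2
          rw [this, adjSwap_apply_right j hc.1 hc.2]
          simp; omega
        · rw [adjSwap_apply_ne i j (by omega) (by omega)]
          exact hi
    · rw [show adjSwap m j = 1 from dif_neg hc]
      simpa using hi
  refine Finset.eq_of_subset_of_card_le hsub ?_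
  rw [Finset.card_image_of_injective _ (adjSwap m j).injective]

lemma winPrefix_mul_adjSwap (σ : Equiv.Perm (Fin m)) (j a N : ℕ)
    (hj1 : a + 1 ≤ j) (hj2 : j < a + N) :
    winPrefix (σ * adjSwap m j) a N = winPrefix σ a N := by
  unfold winPrefix
  rw [Equiv.Perm.coe_mul, ← Finset.image_image, posSet_image_adjSwap j a N hj1 hj2]

lemma winPrefix_applyList (l : List ℕ) (σ : Equiv.Perm (Fin m)) (a N : ℕ)
    (h : ∀ j ∈ l, a + 1 ≤ j ∧ j < a + N) :
    winPrefix (applyList σ l) a N = winPrefix σ a N := by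
  induction l generalizing σ with
  | nil => rfl
  | cons j l ih =>
      rw [applyList, ih _ (fun j hj => h j (List.mem_cons_of_mem _ hj)),
        winPrefix_mul_adjSwap σ j a N (h j List.mem_cons_self).1
          (h j List.mem_cons_self).2]

def descList (a : ℕ) : ℕ → List ℕ
  | 0 => []
  | r + 1 => (a + r + 1) :: descList a r

lemma descList_length (a r : ℕ) : (descList a r).length = r := by
  induction r with
  | zero => rfl
  | succ r ih => simp [descList, ih]

lemma descList_mem (a r j : ℕ) (hj : j ∈ descList a r) : a + 1 ≤ j ∧ j ≤ a + r := by
  induction r with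
  | zero => simp [descList] at hj
  | succ r ih =>
      simp only [descList, List.mem_cons] at hj
      rcases hj with h | h
      · omega
      · have := ih h; omega

lemma descList_shift (a r : ℕ) : descList a (r + 1) = descList (a + 1) r ++ [a + 1] := by
  induction r with
  | zero => rfl
  | succ r ih =>
      show (a + (r+1) + 1) :: descList a (r + 1) = _
      rw [ih]
      show _ = ((a + 1 + r + 1) :: descList (a+1) r) ++ [a+1]
      simp only [List.cons_append]
      congr 2
      omega

lemma desc_eq (n a : ℕ) :
    ((List.range n).map (fun j => n - j)).map (· + a) = descList a n := by
  induction n generalizing a with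
  | zero => rfl
  | succ n ih =>
      rw [List.range_succ]
      simp only [List.map_append, List.map_map, List.map_cons, List.map_nil]
      rw [descList_shift]
      congr 1
      · rw [← ih (a + 1), List.map_map]
        apply List.map_congr_left
        intro j hj
        simp only [List.mem_range] at hj
        simp only [Function.comp_apply]
        omega
      · simp [Nat.add_comm]

lemma descList_effect (r : ℕ) : ∀ (a : ℕ) (σ : Equiv.Perm (Fin m)) (h : a + r + 1 ≤ m),
    (applyList σ (descList a r) ⟨a, by omega⟩ = σ ⟨a + r, by omega⟩) ∧
    (∀ i (hi1 : 1 ≤ i) (hi2 : i ≤ r),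
      applyList σ (descList a r) ⟨a + i, by omega⟩ = σ ⟨a + i - 1, by omega⟩) := by
  induction r with
  | zero =>
      intro a σ h
      exact ⟨rfl, fun i hi1 hi2 => by omega⟩
  | succ r ih =>
      intro a σ h
      have hrec : descList a (r + 1) = (a + r + 1) :: descList a r := rfl
      set σ' := σ * adjSwap m (a + r + 1) with hσ'
      have happ : applyList σ (descList a (r + 1)) = applyList σ' (descList a r) := by
        rw [hrec]; rfl
      have ihh := ih a σ' (by omega)
      constructor
      · rw [happ, ihh.1]
        show σ (adjSwap m (a + r + 1) ⟨a + r, _⟩) = _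
        have : (⟨a + r, by omega⟩ : Fin m) = ⟨(a + r + 1) - 1, by omega⟩ := Fin.ext rfl
        rw [this, adjSwap_apply_left (a + r + 1) (by omega) (by omega)]
        rfl
      · intro i hi1 hi2
        rcases Nat.lt_or_ge i (r + 1) with hlt | hge
        · rw [happ, ihh.2 i hi1 (by omega)]
          show σ (adjSwap m (a + r + 1) ⟨a + i - 1, _⟩) = _
          rw [adjSwap_apply_ne _ (a + r + 1) (by simp; omega) (by simp; omega)]
        · have hieq : i = r + 1 := by omega
          subst hieq
          rw [happ, applyList_fix _ σ' ⟨a + (r + 1), by omega⟩ ?_]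
          · show σ (adjSwap m (a + r + 1) ⟨a + (r + 1), _⟩) = _
            have e1 : (⟨a + (r + 1), by omega⟩ : Fin m) = ⟨a + r + 1, by omega⟩ :=
              Fin.ext rfl
            rw [e1, adjSwap_apply_right (a + r + 1) (by omega) (by omega)]
            congr 1
          · intro j hj
            have := descList_mem a r j hj
            simp; omega

lemma upsilon_bounds (Υ : ℕ → List ℕ) (hbase : Υ 2 = [1])
    (hrec : ∀ k, 3 ≤ k →
      Υ k = Υ (k - 1) ++ (List.range (k - 1)).map (fun j => k - 1 - j)
              ++ (Υ (k - 1)).map (· + 1)) :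
    ∀ n, 2 ≤ n → ∀ j ∈ Υ n, 1 ≤ j ∧ j ≤ n - 1 := by
  intro n hn
  induction n, hn using Nat.le_induction with
  | base => intro j hj; rw [hbase] at hj; simp at hj; omega
  | succ n hn ih =>
      intro j hj
      rw [hrec (n + 1) (by omega)] at hj
      simp only [Nat.add_sub_cancel, List.mem_append, List.mem_map, List.mem_range] at hj
      rcases hj with (hj | ⟨u, hu, rfl⟩) | ⟨u, hu, rfl⟩
      · have := ih j hj; omega
      · omega
      · have := ih u hu; omega

lemma cover (Υ : ℕ → List ℕ) (hbase : Υ 2 = [1])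
    (hrec : ∀ k, 3 ≤ k →
      Υ k = Υ (k - 1) ++ (List.range (k - 1)).map (fun j => k - 1 - j)
              ++ (Υ (k - 1)).map (· + 1)) :
    ∀ n, 2 ≤ n → ∀ (m a : ℕ) (σ0 : Equiv.Perm (Fin m)), a + n ≤ m →
      ∀ S : Finset (Fin m), 1 ≤ S.card → S.card ≤ n - 1 → S ⊆ winPrefix σ0 a n →
      ∃ t ≤ (Υ n).length,
        winPrefix (applyList σ0 (((Υ n).map (· + a)).take t)) a S.card = S := by
  intro n hn
  induction n, hn using Nat.le_induction with
  | base =>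
      intro m a σ0 ham S hS1 hS2 hSsub
      have hcard : S.card = 1 := by omega
      obtain ⟨s, rfl⟩ := Finset.card_eq_one.mp hcard
      have hs : s ∈ winPrefix σ0 a 2 := hSsub (Finset.mem_singleton_self s)
      rw [winPrefix_succ σ0 a 1 (by omega), winPrefix_succ σ0 a 0 (by omega),
        winPrefix_zero] at hs
      simp only [Finset.mem_insert, Finset.mem_singleton, Finset.notMem_empty, or_false,
        insert_empty_eq] at hs
      rw [hbase, hcard]
      rcases hs with hs | hs
      · -- s = σ0 ⟨a+1⟩ : take t = 1
        refine ⟨1, by simp, ?_⟩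
        have h1 : (([1].map (· + a)).take 1 : List ℕ) = [a + 1] := by
          simp [Nat.add_comm]
        rw [h1]
        show winPrefix (σ0 * adjSwap m (a + 1)) a 1 = {s}
        rw [winPrefix_succ _ a 0 (by omega), winPrefix_zero]
        have : (σ0 * adjSwap m (a + 1)) ⟨a + 0, by omega⟩ = σ0 ⟨a + 1, by omega⟩ := by
          show σ0 (adjSwap m (a + 1) ⟨a + 0, _⟩) = _
          have e1 : (⟨a + 0, by omega⟩ : Fin m) = ⟨(a + 1) - 1, by omega⟩ := Fin.ext rfl
          rw [e1, adjSwap_apply_left (a + 1) (by omega) (by omega)]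
        rw [this, hs]
        simp
      · -- s = σ0 ⟨a+0⟩ : t = 0
        refine ⟨0, by simp, ?_⟩
        rw [List.take_zero]
        show winPrefix σ0 a 1 = {s}
        rw [winPrefix_succ _ a 0 (by omega), winPrefix_zero, hs]
        simp
  | succ n hn ih =>
      intro m a σ0 ham S hS1 hS2 hSsub
      have hb := upsilon_bounds Υ hbase hrec n hn
      have hΥ : Υ (n + 1) = Υ n ++ (List.range n).map (fun j => n - j)
          ++ (Υ n).map (· + 1) := by
        have := hrec (n + 1) (by omega)
        simpa using this
      set L1 : List ℕ := (Υ n).map (· + a) with hL1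
      set D : List ℕ := descList a n with hD
      set L3 : List ℕ := (Υ n).map (· + (a + 1)) with hL3
      have hbig : (Υ (n + 1)).map (· + a) = L1 ++ D ++ L3 := by
        rw [hΥ, List.map_append, List.map_append, desc_eq, List.map_map]
        congr 1
        apply List.map_congr_left
        intro u hu
        simp only [Function.comp_apply]
        omega
      have hL1mem : ∀ j ∈ L1, a + 1 ≤ j ∧ j ≤ a + n - 1 := by
        intro j hj
        simp only [hL1, List.mem_map] at hj
        obtain ⟨u, hu, rfl⟩ := hj
        have := hb u hu
        omega
      have hL3mem : ∀ j ∈ L3, a + 2 ≤ j ∧ j ≤ a + n := by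
        intro j hj
        simp only [hL3, List.mem_map] at hj
        obtain ⟨u, hu, rfl⟩ := hj
        have := hb u hu
        omega
      have hlen : (Υ (n + 1)).length = (Υ n).length + n + (Υ n).length := by
        rw [hΥ]; simp; omega
      set x : Fin m := σ0 ⟨a + n, by omega⟩ with hx
      set σ1 : Equiv.Perm (Fin m) := applyList σ0 L1 with hσ1
      set σ2 : Equiv.Perm (Fin m) := applyList σ1 D with hσ2
      have hσ1x : σ1 ⟨a + n, by omega⟩ = x := by
        rw [hσ1, applyList_fix]
        intro j hj
        have := hL1mem j hj
        simp only [Fin.val_mk]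
        omega
      have hσ2a : σ2 ⟨a, by omega⟩ = x := by
        rw [hσ2, hD, (descList_effect n a σ1 (by omega)).1, hσ1x]
      -- the top decomposition of the full window at time 0
      have htop : winPrefix σ0 a (n + 1) = insert x (winPrefix σ0 a n) :=
        winPrefix_succ σ0 a n (by omega)
      have hxtop : x ∉ winPrefix σ0 a n :=
        not_mem_winPrefix σ0 _ a n (by simp)
      by_cases hxS : x ∈ S
      · -- S contains x
        rcases Nat.lt_or_ge 1 S.card with h2 | h1
        · -- |S| ≥ 2: phase 3
          have hS'card : (S.erase x).card = S.card - 1 := Finset.card_erase_of_mem hxS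
          have hpres : winPrefix σ2 a (n + 1) = winPrefix σ0 a (n + 1) := by
            rw [hσ2, hσ1, ← applyList_append]
            apply winPrefix_applyList
            intro j hj
            rcases List.mem_append.mp hj with hj | hj
            · have := hL1mem j hj; omega
            · have := descList_mem a n j hj; omega
          have hcons2 : winPrefix σ2 a (n + 1)
              = insert x (winPrefix σ2 (a + 1) n) := by
            rw [winPrefix_cons σ2 a (n + 1) (by omega) (by omega), hσ2a]
            simp
          have hxnot2 : x ∉ winPrefix σ2 (a + 1) n := by
            rw [← hσ2a]
            exact not_mem_winPrefix σ2 _ (a + 1) n (by simp)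
          have hWeq : winPrefix σ2 (a + 1) n = (winPrefix σ0 a (n + 1)).erase x := by
            rw [← hpres, hcons2, Finset.erase_insert hxnot2]
          have hS'sub : S.erase x ⊆ winPrefix σ2 (a + 1) n := by
            rw [hWeq]
            exact Finset.erase_subset_erase x hSsub
          obtain ⟨t', ht', hw⟩ := ih m (a + 1) σ2 (by omega) (S.erase x)
            (by omega) (by omega) hS'sub
          refine ⟨(Υ n).length + n + t', by omega, ?_⟩
          have htake : ((Υ (n + 1)).map (· + a)).take ((Υ n).length + n + t')
              = (L1 ++ D) ++ L3.take t' := by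
            rw [hbig]
            have hlen12 : (L1 ++ D).length = (Υ n).length + n := by
              simp [hL1, hD, descList_length]
            rw [← hlen12, List.take_length_add_append]
          have hρ2 : applyList (applyList σ0 (L1 ++ D)) (L3.take t')
              = applyList σ2 (L3.take t') := by
            rw [applyList_append, ← hσ1, ← hσ2]
          have hρa : applyList σ2 (L3.take t') ⟨a, by omega⟩ = x := by
            rw [applyList_fix]
            · exact hσ2a
            · intro j hj
              have := hL3mem j (List.take_subset t' L3 hj)
              simp only [Fin.val_mk]
              omega
          rw [htake, applyList_append, hρ2]
          rw [winPrefix_cons _ a S.card (by omega) (by omega), hρa]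
          rw [hS'card] at hw
          rw [hw]
          exact Finset.insert_erase hxS
        · -- |S| = 1 : S = {x}, time = end of phase 2
          have hcard : S.card = 1 := by omega
          obtain ⟨s, rfl⟩ := Finset.card_eq_one.mp hcard
          have hsx : s = x := (Finset.mem_singleton.mp hxS).symm
          refine ⟨(Υ n).length + n, by omega, ?_⟩
          have htake : ((Υ (n + 1)).map (· + a)).take ((Υ n).length + n)
              = L1 ++ D := by
            rw [hbig]
            have hlen12 : (L1 ++ D).length = (Υ n).length + n := by
              simp [hL1, hD, descList_length]
            rw [← hlen12]
            exact List.take_left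
          rw [htake, hcard, applyList_append, ← hσ1, ← hσ2]
          rw [winPrefix_cons σ2 a 1 (by omega) (by omega), hσ2a]
          simp [winPrefix_zero, hsx]
      · -- x ∉ S
        have hSsub' : S ⊆ winPrefix σ0 a n := by
          intro y hy
          have := hSsub hy
          rw [htop, Finset.mem_insert] at this
          rcases this with rfl | h
          · exact absurd hy hxS
          · exact h
        rcases Nat.lt_or_ge S.card n with hlt | hge
        · -- |S| ≤ n − 1: phase 1, apply ih directly
          obtain ⟨t, ht, hw⟩ := ih m a σ0 (by omega) S hS1 (by omega) hSsub'
          refine ⟨t, by omega, ?_⟩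
          have htake : ((Υ (n + 1)).map (· + a)).take t = L1.take t := by
            rw [hbig, List.append_assoc]
            exact List.take_append_of_le_length (by simpa [hL1] using ht)
          rw [htake]
          exact hw
        · -- |S| = n: S is exactly the size-n prefix at time 0
          have hcard : S.card = n := by omega
          have hSeq : S = winPrefix σ0 a n := by
            apply Finset.eq_of_subset_of_card_le hSsub'
            rw [card_winPrefix σ0 a n (by omega), hcard]
          exact ⟨0, by omega, by rw [List.take_zero, hcard]; exact hSeq.symm⟩

end GreedyAux


open GreedyAux in
lemma GreedyAux.prefixSet_eq_winPrefix {m : ℕ} (σ : Equiv.Perm (Fin m)) (k : ℕ) :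
    prefixSet σ k = winPrefix σ 0 k := by
  unfold prefixSet winPrefix posSet
  congr 1
  ext i
  simp

open GreedyAux in
lemma GreedyAux.winPrefix_one_univ {m : ℕ} :
    winPrefix (1 : Equiv.Perm (Fin m)) 0 m = Finset.univ := by
  ext i
  simp only [winPrefix, posSet, Finset.mem_image, Finset.mem_filter, Finset.mem_univ,
    true_and, iff_true]
  exact ⟨i, by simp [i.isLt], rfl⟩

/-- Let m ≥ 2 and let Υ be the GreedySwaps list (Υ(2) = [1];
Υ(m) = Υ(m−1) ++ [m−1, …, 1] ++ [i+1 : i ∈ Υ(m−1)]).  Define π_0 = identity and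
π_{t+1} = π_t followed by the adjacent transposition at position Υ(m)[t+1]
(the (t+1)-st, i.e. 0-based t-th, entry of the list).  Then every subset S with
1 ≤ |S| ≤ m−1 occurs as the prefix set of size |S| of some π_t, t ≤ |Υ(m)|. -/
theorem greedy_covers_all_models (m : ℕ) (hm : 2 ≤ m)
    (Υ : ℕ → List ℕ)
    (hbase : Υ 2 = [1])
    (hrec : ∀ k, 3 ≤ k →
      Υ k = Υ (k - 1) ++ (List.range (k - 1)).map (fun j => k - 1 - j)
              ++ (Υ (k - 1)).map (· + 1))
    (π : ℕ → Equiv.Perm (Fin m))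
    (h0 : π 0 = 1)
    (hstep : ∀ t, t < (Υ m).length →
      π (t + 1) = π t * adjSwap m ((Υ m).getD t 0)) :
    ∀ S : Finset (Fin m), 1 ≤ S.card → S.card ≤ m - 1 →
      ∃ t ≤ (Υ m).length, prefixSet (π t) S.card = S := by
  intro S h1 h2
  have hπ : ∀ t, t ≤ (Υ m).length → π t = GreedyAux.applyList 1 ((Υ m).take t) := by
    intro t
    induction t with
    | zero => intro _; simpa [GreedyAux.applyList] using h0
    | succ t ih =>
        intro ht
        have ht' : t < (Υ m).length := by omega
        have htake : (Υ m).take (t + 1) = (Υ m).take t ++ [(Υ m).getD t 0] := by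
          rw [List.take_succ]
          congr 1
          rw [List.getElem?_eq_getElem ht', Option.toList_some,
            List.getD_eq_getElem (Υ m) 0 ht']
        rw [hstep t ht', ih (by omega), htake, GreedyAux.applyList_append]
        rfl
  obtain ⟨t, ht, hw⟩ := GreedyAux.cover Υ hbase hrec m hm m 0 1 (by omega) S h1 h2
    (by rw [GreedyAux.winPrefix_one_univ]; exact Finset.subset_univ S)
  refine ⟨t, ht, ?_⟩
  have hmap : (Υ m).map (· + 0) = Υ m := by simp
  rw [hmap] at hw
  rw [hπ t ht, GreedyAux.prefixSet_eq_winPrefix]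
  exact hw
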